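/- Let r, g : ℝ^d → ℝ ∪ {∞} be closed convex proper, f : ℝ^d → ℝ convex differentiable, α > 0, and define p(z) = (1/α)(x − x') where x = prox_{αr}(z) and x' = prox_{αg}(2x − z − α∇f(x)). Then for all z, z̃ ∈ ℝ^d: α‖p(z) − p(z̃)‖² ≤ ⟨p(z) − p(z̃), z − z̃⟩ − ⟨∇f(x) − ∇f(x̃), x' − x̃'⟩, where x̃, x̃' are defined from z̃ analogously. -/

import Mathlib

open Set Filter Topology
open scoped RealInnerProductSpace

noncomputable section

/-- `f` is closed (lower semicontinuous), convex, and proper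
as an extended-real-valued function. -/
def ClosedConvexProper {E : Type*} [NormedAddCommGroup E] [NormedSpace ℝ E]
    (f : E → EReal) : Prop :=
  LowerSemicontinuous f ∧
  (∀ (a b : ℝ) (x y : E), 0 ≤ a → 0 ≤ b → a + b = 1 →
    f (a • x + b • y) ≤ (a : EReal) * f x + (b : EReal) * f y) ∧
  (∀ x, f x ≠ ⊥) ∧ (∃ x, f x ≠ ⊤)

/-- `p` is a minimizer of the prox objective of the extended-real-valued `f` at `x₀`. -/
def IsProxPt {E : Type*} [NormedAddCommGroup E] [InnerProductSpace ℝ E]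
    (f : E → EReal) (x₀ p : E) : Prop :=
  IsMinOn (fun x => f x + ((1 / 2 * ‖x - x₀‖ ^ 2 : ℝ) : EReal)) Set.univ p

/-- `p` is a minimizer of the prox objective of the real-valued `f` at `x₀`. -/
def IsProxPtR {E : Type*} [NormedAddCommGroup E] [InnerProductSpace ℝ E]
    (f : E → ℝ) (x₀ p : E) : Prop :=
  IsMinOn (fun x => f x + 1 / 2 * ‖x - x₀‖ ^ 2) Set.univ p

section Aux
variable {E : Type*} [NormedAddCommGroup E] [InnerProductSpace ℝ E]

lemma prox_finite (h : E → EReal) (hbot : ∀ x, h x ≠ ⊥) (htop : ∃ x, h x ≠ ⊤)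
    {w p : E} (hp : IsProxPt h w p) : ∃ a : ℝ, h p = (a : EReal) := by
  obtain ⟨x₀, hx₀⟩ := htop
  have hmin := isMinOn_iff.mp hp x₀ (mem_univ _)
  obtain ⟨b, hb⟩ : ∃ b : ℝ, h x₀ = (b : EReal) :=
    ⟨(h x₀).toReal, (EReal.coe_toReal hx₀ (hbot x₀)).symm⟩
  rw [hb] at hmin
  have hne : h p ≠ ⊤ := by
    intro htop'
    rw [htop', EReal.top_add_of_ne_bot (EReal.coe_ne_bot _), ← EReal.coe_add] at hmin
    exact EReal.coe_ne_top _ (top_le_iff.mp hmin)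
  exact ⟨(h p).toReal, (EReal.coe_toReal hne (hbot p)).symm⟩

/-- One-sided subgradient-type inequality from prox optimality. -/
lemma prox_key (h : E → EReal)
    {w p q : E} {A B : ℝ} (hA : h p = (A : EReal)) (hB : h q = (B : EReal))
    (hp : IsProxPt h w p) {t : ℝ} (ht : 0 < t) (ht1 : t < 1)
    (hconv : h ((1 - t) • p + t • q) ≤ (((1 - t) * A + t * B : ℝ) : EReal)) :
    A - B ≤ ⟪p - w, q - p⟫ + t / 2 * ‖q - p‖ ^ 2 := by
  have hx := isMinOn_iff.mp hp ((1 - t) • p + t • q) (mem_univ _)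
  rw [hA] at hx
  have hreal : (A : EReal) + ((1 / 2 * ‖p - w‖ ^ 2 : ℝ) : EReal) ≤
      (((1 - t) * A + t * B : ℝ) : EReal) +
        ((1 / 2 * ‖(1 - t) • p + t • q - w‖ ^ 2 : ℝ) : EReal) :=
    hx.trans (add_le_add_left hconv _)
  rw [← EReal.coe_add, ← EReal.coe_add, EReal.coe_le_coe_iff] at hreal
  have hvec : (1 - t) • p + t • q - w = (p - w) + t • (q - p) := by module
  rw [hvec, norm_add_sq_real, real_inner_smul_right, norm_smul] at hreal
  rw [Real.norm_eq_abs, abs_of_pos ht] at hreal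
  have key2 : t * (A - B) ≤ t * (⟪p - w, q - p⟫ + t / 2 * ‖q - p‖ ^ 2) := by
    nlinarith [hreal]
  exact le_of_mul_le_mul_left key2 ht

lemma prox_mono (h : E → EReal)
    (hconv2 : ∀ (a b : ℝ) (x y : E) (X Y : ℝ), 0 ≤ a → 0 ≤ b → a + b = 1 →
      h x = (X : EReal) → h y = (Y : EReal) →
      h (a • x + b • y) ≤ ((a * X + b * Y : ℝ) : EReal))
    (hbot : ∀ x, h x ≠ ⊥) (htop : ∃ x, h x ≠ ⊤)
    {w v p q : E} (hp : IsProxPt h w p) (hq : IsProxPt h v q) :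
    ‖p - q‖ ^ 2 ≤ ⟪p - q, w - v⟫ := by
  obtain ⟨A, hA⟩ := prox_finite h hbot htop hp
  obtain ⟨B, hB⟩ := prox_finite h hbot htop hq
  have key : ∀ t : ℝ, 0 < t → t < 1 → ‖p - q‖ ^ 2 - ⟪p - q, w - v⟫ ≤ t * ‖p - q‖ ^ 2 := by
    intro t ht ht1
    have h1 := prox_key h hA hB hp ht ht1
      (hconv2 (1 - t) t p q A B (by linarith) (by linarith) (by ring) hA hB)
    have h2 := prox_key h hB hA hq ht ht1
      (hconv2 (1 - t) t q p B A (by linarith) (by linarith) (by ring) hB hA)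
    have nsym : ‖q - p‖ = ‖p - q‖ := by rw [← norm_neg]; congr 1; abel
    rw [nsym] at h1
    have expand : ⟪p - w, q - p⟫ + ⟪q - v, p - q⟫ = ⟪p - q, w - v⟫ - ‖p - q‖ ^ 2 := by
      rw [show (‖p - q‖ ^ 2 : ℝ) = ⟪p - q, p - q⟫ from (real_inner_self_eq_norm_sq _).symm]
      simp only [inner_sub_left, inner_sub_right]
      linarith [real_inner_comm p w, real_inner_comm p q, real_inner_comm p v,
        real_inner_comm q w, real_inner_comm q v, real_inner_comm w v]
    linarith
  by_contra hcon
  push_neg at hcon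
  set c := ‖p - q‖ ^ 2 - ⟪p - q, w - v⟫ with hc
  have hcpos : 0 < c := by linarith
  have hnpos : 0 < ‖p - q‖ ^ 2 := by
    rcases lt_or_ge 0 (‖p - q‖ ^ 2) with hh | hh
    · exact hh
    · have := key (1/2) (by norm_num) (by norm_num)
      nlinarith
  set t := min (1/2 : ℝ) (c / (2 * ‖p - q‖ ^ 2)) with htdef
  have ht0 : 0 < t := lt_min (by norm_num) (by positivity)
  have ht1 : t < 1 := lt_of_le_of_lt (min_le_left _ _) (by norm_num)
  have hkey := key t ht0 ht1
  have hle : t * ‖p - q‖ ^ 2 ≤ c / 2 := by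
    have hmr : t ≤ c / (2 * ‖p - q‖ ^ 2) := min_le_right _ _
    calc t * ‖p - q‖ ^ 2 ≤ c / (2 * ‖p - q‖ ^ 2) * ‖p - q‖ ^ 2 := by nlinarith
    _ = c / 2 := by
      have hn0 : ‖p - q‖ ≠ 0 := by intro h0; rw [h0] at hnpos; norm_num at hnpos
      field_simp
  linarith

/-- Monotonicity (firm nonexpansiveness) of the prox of `α • r`. -/
lemma scaled_prox_mono (α : ℝ) (hα : 0 < α) (r : E → EReal) (hr : ClosedConvexProper r)
    {w v p q : E} (hp : IsProxPt (fun x => (α : EReal) * r x) w p)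
    (hq : IsProxPt (fun x => (α : EReal) * r x) v q) :
    ‖p - q‖ ^ 2 ≤ ⟪p - q, w - v⟫ := by
  have hαE : (0 : EReal) < (α : EReal) := by exact_mod_cast hα
  apply prox_mono (fun x => (α : EReal) * r x) ?_ ?_ ?_ hp hq
  · intro a b x y X Y ha hb hab hX hY
    have hxt : r x ≠ ⊤ := by
      intro hh; rw [hh, EReal.mul_top_of_pos hαE] at hX
      exact EReal.coe_ne_top X hX.symm
    have hyt : r y ≠ ⊤ := by
      intro hh; rw [hh, EReal.mul_top_of_pos hαE] at hY
      exact EReal.coe_ne_top Y hY.symm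
    obtain ⟨cx, hcx⟩ : ∃ c : ℝ, r x = (c : EReal) :=
      ⟨(r x).toReal, (EReal.coe_toReal hxt (hr.2.2.1 x)).symm⟩
    obtain ⟨cy, hcy⟩ : ∃ c : ℝ, r y = (c : EReal) :=
      ⟨(r y).toReal, (EReal.coe_toReal hyt (hr.2.2.1 y)).symm⟩
    have hXc : α * cx = X := by
      rw [hcx, ← EReal.coe_mul] at hX; exact_mod_cast hX
    have hYc : α * cy = Y := by
      rw [hcy, ← EReal.coe_mul] at hY; exact_mod_cast hY
    have hconv := hr.2.1 a b x y ha hb hab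
    rw [hcx, hcy] at hconv
    have hconv' : r (a • x + b • y) ≤ ((a * cx + b * cy : ℝ) : EReal) :=
      hconv.trans_eq (by norm_cast)
    calc (α : EReal) * r (a • x + b • y)
        ≤ (α : EReal) * ((a * cx + b * cy : ℝ) : EReal) :=
          mul_le_mul_of_nonneg_left hconv' hαE.le
      _ = ((α * (a * cx + b * cy) : ℝ) : EReal) := (EReal.coe_mul _ _).symm
      _ = ((a * X + b * Y : ℝ) : EReal) := by rw [← hXc, ← hYc]; norm_cast; ring
  · intro x
    rcases eq_or_ne (r x) ⊤ with hh | hh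
    · rw [hh, EReal.mul_top_of_pos hαE]; simp
    · obtain ⟨c, hc⟩ : ∃ c : ℝ, r x = (c : EReal) :=
        ⟨(r x).toReal, (EReal.coe_toReal hh (hr.2.2.1 x)).symm⟩
      rw [hc, ← EReal.coe_mul]; exact EReal.coe_ne_bot _
  · obtain ⟨x, hx⟩ := hr.2.2.2
    refine ⟨x, ?_⟩
    obtain ⟨c, hc⟩ : ∃ c : ℝ, r x = (c : EReal) :=
      ⟨(r x).toReal, (EReal.coe_toReal hx (hr.2.2.1 x)).symm⟩
    rw [hc, ← EReal.coe_mul]; exact EReal.coe_ne_top _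

end Aux

/-- Key inequality for the PPG residual operator (n = 1, Davis–Yin type). -/
theorem stmt10
    {d : ℕ} (α : ℝ) (hα : 0 < α)
    (r g : EuclideanSpace ℝ (Fin d) → EReal)
    (hr : ClosedConvexProper r) (hg : ClosedConvexProper g)
    (f : EuclideanSpace ℝ (Fin d) → ℝ) (hfconv : ConvexOn ℝ Set.univ f)
    (f' : EuclideanSpace ℝ (Fin d) → EuclideanSpace ℝ (Fin d))
    (hf' : ∀ x, HasGradientAt f (f' x) x)
    (Pr Pg : EuclideanSpace ℝ (Fin d) → EuclideanSpace ℝ (Fin d))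
    (hPr : ∀ w, IsProxPt (fun x => (α : EReal) * r x) w (Pr w))
    (hPg : ∀ w, IsProxPt (fun x => (α : EReal) * g x) w (Pg w))
    (P : EuclideanSpace ℝ (Fin d) → EuclideanSpace ℝ (Fin d))
    (hP : ∀ z, P z = α⁻¹ • (Pr z - Pg ((2 : ℝ) • Pr z - z - α • f' (Pr z))))
    :
    ∀ z zt : EuclideanSpace ℝ (Fin d),
      α * ‖P z - P zt‖ ^ 2 ≤
        ⟪P z - P zt, z - zt⟫ -
          ⟪f' (Pr z) - f' (Pr zt),
            Pg ((2 : ℝ) • Pr z - z - α • f' (Pr z)) -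
              Pg ((2 : ℝ) • Pr zt - zt - α • f' (Pr zt))⟫ := by
  intro z zt
  set x := Pr z with hx
  set xt := Pr zt with hxt
  set wz := (2 : ℝ) • x - z - α • f' x with hwz
  set wzt := (2 : ℝ) • xt - zt - α • f' xt with hwzt
  set x' := Pg wz with hx'
  set xt' := Pg wzt with hxt'
  set u := x - xt with hu
  set u' := x' - xt' with hu'
  set δf := f' x - f' xt with hδf
  have hA : ‖u‖ ^ 2 ≤ ⟪u, z - zt⟫ := scaled_prox_mono α hα r hr (hPr z) (hPr zt)
  have hB : ‖u'‖ ^ 2 ≤ ⟪u', wz - wzt⟫ := scaled_prox_mono α hα g hg (hPg wz) (hPg wzt)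
  have hwdiff : wz - wzt = (2 : ℝ) • u - (z - zt) - α • δf := by
    rw [hwz, hwzt, hu, hδf]; module
  have hB' : ‖u'‖ ^ 2 ≤ 2 * ⟪u', u⟫ - ⟪u', z - zt⟫ - α * ⟪u', δf⟫ := by
    rw [hwdiff, inner_sub_right, inner_sub_right, real_inner_smul_right,
      real_inner_smul_right] at hB
    linarith
  have hPd : P z - P zt = α⁻¹ • (u - u') := by
    rw [hP z, hP zt]; rw [hu, hu', hx, hxt, hx', hxt', hwz, hwzt]; module
  have hmain : ‖u - u'‖ ^ 2 ≤ ⟪u - u', z - zt⟫ - α * ⟪δf, u'⟫ := by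
    have c1 := real_inner_comm u u'
    have c2 : α * ⟪δf, u'⟫ = α * ⟪u', δf⟫ := by rw [real_inner_comm]
    have hexp1 : ‖u - u'‖ ^ 2 = ‖u‖ ^ 2 - 2 * ⟪u, u'⟫ + ‖u'‖ ^ 2 := norm_sub_sq_real u u'
    have hexp2 : (⟪u - u', z - zt⟫ : ℝ) = ⟪u, z - zt⟫ - ⟪u', z - zt⟫ :=
      inner_sub_left _ _ _
    linarith
  rw [hPd, norm_smul, real_inner_smul_left, Real.norm_eq_abs, abs_of_pos (inv_pos.mpr hα),
    mul_pow]
  have hinvpos : 0 < α⁻¹ := inv_pos.mpr hα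
  have hgoal : α * (α⁻¹ ^ 2 * ‖u - u'‖ ^ 2) = α⁻¹ * ‖u - u'‖ ^ 2 := by
    field_simp
  rw [hgoal]
  have h1 := mul_le_mul_of_nonneg_left hmain hinvpos.le
  calc α⁻¹ * ‖u - u'‖ ^ 2 ≤ α⁻¹ * (⟪u - u', z - zt⟫ - α * ⟪δf, u'⟫) := h1
    _ = α⁻¹ * ⟪u - u', z - zt⟫ - ⟪δf, u'⟫ := by field_simp
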